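/- For every integer n ≥ 6, every real x ≥ 0, and all r_a, r_b ∈ [0,1], the following inequality holds: (r_b + n − 2)·x² + x·(2·√((1+r_a)(1+r_b)) − 2n + 2) + r_a + n − 2 ≥ 0. -/
import Mathlib


/-- the scalar compatibility inequality for the pair `(γ_n, γ_{2n})`
with midpoint value `n/2 - 1`: for `n ≥ 6`, `x ≥ 0`, `r_a, r_b ∈ [0,1]`,
`(r_b + n - 2)x² + x(2√((1+r_a)(1+r_b)) - 2n + 2) + r_a + n - 2 ≥ 0`. -/
theorem scalar_compat_midpoint_half (n : ℕ) (hn : 6 ≤ n) (x ra rb : ℝ)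
    (hx : 0 ≤ x) (hra0 : 0 ≤ ra) (hra1 : ra ≤ 1) (hrb0 : 0 ≤ rb) (hrb1 : rb ≤ 1) :
    0 ≤ (rb + (n : ℝ) - 2) * x ^ 2
        + x * (2 * Real.sqrt ((1 + ra) * (1 + rb)) - 2 * (n : ℝ) + 2)
        + ra + (n : ℝ) - 2 := by
  have hn6 : (6 : ℝ) ≤ (n : ℝ) := by exact_mod_cast hn
  set s := Real.sqrt ((1 + ra) * (1 + rb)) with hs
  have hnn : (0 : ℝ) ≤ (1 + ra) * (1 + rb) := by nlinarith
  have hs2 : s ^ 2 = (1 + ra) * (1 + rb) := Real.sq_sqrt hnn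
  have hs1 : 1 ≤ s := by
    have h := Real.sqrt_le_sqrt (show (1:ℝ) ≤ (1 + ra) * (1 + rb) by nlinarith)
    rwa [Real.sqrt_one] at h
  nlinarith [sq_nonneg (2 * (rb + (n : ℝ) - 2) * x + (2 * s - 2 * n + 2)),
    mul_pos (show (0:ℝ) < rb + n - 2 by nlinarith) (show (0:ℝ) < ra + n - 2 by nlinarith),
    mul_nonneg hra0 hrb0, mul_nonneg hx hx]
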